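/- arXiv:2410.15150 — 2 statements merged into one kernel-verified Lean document; each statement's English description precedes it below -/
import Mathlib

section
/- Let X be a complex Hilbert space and D a bounded operator on X. Then there exists a constant c > 0 such that ‖c·D − I‖ ≤ 1 if and only if there exists a constant c₁ > 0 such that c₁·(Im D)² ≤ Re D (as selfadjoint operators), where Re D = (D + D*)/2 and Im D = (D − D*)/(2i). In particular, any such D satisfies Re D ≥ 0. -/
open ContinuousLinearMap
open scoped InnerProductSpace

variable {X : Type*} [NormedAddCommGroup X] [InnerProductSpace ℂ X] [CompleteSpace X]

/-- The real part `Re D = (D + D*)/2` of a bounded operator. -/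
noncomputable def reOp (D : X →L[ℂ] X) : X →L[ℂ] X := (1 / 2 : ℂ) • (D + adjoint D)

/-- The imaginary part `Im D = (D − D*)/(2i)` of a bounded operator. -/
noncomputable def imOp (D : X →L[ℂ] X) : X →L[ℂ] X :=
  (1 / (2 * Complex.I) : ℂ) • (D - adjoint D)

lemma re_inner_comm' (u v : X) : (⟪u, v⟫_ℂ).re = (⟪v, u⟫_ℂ).re := by
  simpa using inner_re_symm (𝕜 := ℂ) u v

lemma reOp_isSelfAdjoint (D : X →L[ℂ] X) : IsSelfAdjoint (reOp D) := by
  rw [isSelfAdjoint_iff']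
  rw [reOp, map_smulₛₗ, map_add, adjoint_adjoint]
  have h : (starRingEnd ℂ) (1 / 2) = 1 / 2 := by simp [Complex.ext_iff]
  rw [h]
  module

lemma imOp_isSelfAdjoint (D : X →L[ℂ] X) : IsSelfAdjoint (imOp D) := by
  rw [isSelfAdjoint_iff']
  have h : (starRingEnd ℂ) (1 / (2 * Complex.I)) = -(1 / (2 * Complex.I)) := by
    simp [Complex.ext_iff]
  rw [imOp, map_smulₛₗ, map_sub, adjoint_adjoint, h]
  module

lemma re_inner_reOp (D : X →L[ℂ] X) (x : X) :
    (⟪reOp D x, x⟫_ℂ).re = (⟪D x, x⟫_ℂ).re := by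
  have hc : (starRingEnd ℂ) (1 / 2) = 1 / 2 := by simp [Complex.ext_iff]
  have h1 : ⟪reOp D x, x⟫_ℂ = (1 / 2 : ℂ) * (⟪D x, x⟫_ℂ + ⟪x, D x⟫_ℂ) := by
    simp only [reOp, coe_smul', Pi.smul_apply, add_apply, inner_smul_left, inner_add_left,
      adjoint_inner_left, hc]
  rw [h1]
  have h2 : (⟪x, D x⟫_ℂ).re = (⟪D x, x⟫_ℂ).re := re_inner_comm' x (D x)
  simp only [Complex.mul_re, Complex.add_re, Complex.add_im, h2]
  have h3 : (⟪x, D x⟫_ℂ).im = -(⟪D x, x⟫_ℂ).im := by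
    simpa using inner_im_symm (𝕜 := ℂ) x (D x)
  rw [h3]
  simp
  ring

lemma norm_imOp_apply_le (D : X →L[ℂ] X) (x : X) :
    ‖imOp D x‖ ≤ (‖D x‖ + ‖adjoint D x‖) / 2 := by
  have h : imOp D x = (1 / (2 * Complex.I) : ℂ) • (D x - adjoint D x) := by simp [imOp]
  rw [h, norm_smul]
  have hn : ‖(1 / (2 * Complex.I) : ℂ)‖ = 1 / 2 := by simp
  rw [hn]
  have := norm_sub_le (D x) (adjoint D x)
  linarith

lemma re_inner_imOp_sq (D : X →L[ℂ] X) (x : X) :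
    (⟪(imOp D * imOp D) x, x⟫_ℂ).re = ‖imOp D x‖ ^ 2 := by
  have h : ⟪imOp D (imOp D x), x⟫_ℂ = ⟪imOp D x, imOp D x⟫_ℂ := by
    calc ⟪imOp D (imOp D x), x⟫_ℂ = ⟪adjoint (imOp D) (imOp D x), x⟫_ℂ := by
          rw [(imOp_isSelfAdjoint D).adjoint_eq]
    _ = ⟪imOp D x, imOp D x⟫_ℂ := adjoint_inner_left _ _ _
  show (⟪imOp D (imOp D x), x⟫_ℂ).re = _
  rw [h]
  have := inner_self_eq_norm_sq (𝕜 := ℂ) (imOp D x)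
  simpa using this

/-- Cauchy–Schwarz-type bound for positive operators. -/
lemma isPositive_norm_apply_sq_le {A : X →L[ℂ] X} (hA : A.IsPositive) (x : X) :
    ‖A x‖ ^ 2 ≤ ‖A‖ * (⟪A x, x⟫_ℂ).re := by
  have hsa : ∀ u v : X, ⟪A u, v⟫_ℂ = ⟪u, A v⟫_ℂ := fun u v => by
    calc ⟪A u, v⟫_ℂ = ⟪adjoint A u, v⟫_ℂ := by rw [hA.isSelfAdjoint.adjoint_eq]
    _ = ⟪u, A v⟫_ℂ := adjoint_inner_left _ _ _
  have hposre : ∀ u : X, 0 ≤ (⟪A u, u⟫_ℂ).re := fun u => by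
    have := hA.re_inner_nonneg_left u
    simpa using this
  set a : ℝ := (⟪A (A x), A x⟫_ℂ).re with ha
  set b : ℝ := 2 * ‖A x‖ ^ 2 with hb
  set c : ℝ := (⟪A x, x⟫_ℂ).re with hc
  have key : ∀ t : ℝ, 0 ≤ a * (t * t) + b * t + c := by
    intro t
    have h0 : 0 ≤ (⟪A (x + (t : ℂ) • A x), x + (t : ℂ) • A x⟫_ℂ).re := hposre _
    have hAAx : ⟪A (A x), x⟫_ℂ = ⟪A x, A x⟫_ℂ := by rw [hsa (A x) x, hsa x (A x)]
    have hexp : ⟪A (x + (t : ℂ) • A x), x + (t : ℂ) • A x⟫_ℂ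
        = ⟪A x, x⟫_ℂ + (t : ℂ) * ⟪A x, A x⟫_ℂ + (t : ℂ) * ⟪A x, A x⟫_ℂ
          + (t : ℂ) * ((t : ℂ) * ⟪A (A x), A x⟫_ℂ) := by
      rw [map_add, map_smul, inner_add_left, inner_add_right, inner_add_right,
        inner_smul_left, inner_smul_right, inner_smul_left, inner_smul_right, hAAx]
      simp [Complex.conj_ofReal]
      ring
    have hns : (⟪A x, A x⟫_ℂ).re = ‖A x‖ ^ 2 := by
      have := inner_self_eq_norm_sq (𝕜 := ℂ) (A x); simpa using this
    rw [hexp] at h0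
    simp only [Complex.add_re, Complex.mul_re, Complex.ofReal_re, Complex.ofReal_im,
      hns] at h0
    simp only [ha, hb, hc]
    nlinarith [h0]
  have hd := discrim_le_zero key
  rw [discrim] at hd
  have ha_le : a ≤ ‖A‖ * ‖A x‖ ^ 2 := by
    calc a ≤ ‖⟪A (A x), A x⟫_ℂ‖ := Complex.re_le_norm _
    _ ≤ ‖A (A x)‖ * ‖A x‖ := norm_inner_le_norm _ _
    _ ≤ (‖A‖ * ‖A x‖) * ‖A x‖ :=
        mul_le_mul_of_nonneg_right (A.le_opNorm (A x)) (norm_nonneg _)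
    _ = ‖A‖ * ‖A x‖ ^ 2 := by ring
  have hcnn : 0 ≤ c := hposre x
  rcases eq_or_lt_of_le (norm_nonneg (A x)) with h0 | h0
  · rw [← h0]
    have : 0 ≤ ‖A‖ * c := mul_nonneg (norm_nonneg _) hcnn
    simpa using this
  · have h4 : ‖A x‖ ^ 2 * ‖A x‖ ^ 2 ≤ a * c := by nlinarith [hd]
    nlinarith [h4, mul_le_mul_of_nonneg_right ha_le hcnn, pow_pos h0 2]

/-- The norm condition is equivalent to a pointwise quadratic inequality. -/
lemma norm_smul_sub_one_le_iff (D : X →L[ℂ] X) {c : ℝ} (hc : 0 < c) :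
    ‖(c : ℂ) • D - 1‖ ≤ 1 ↔ ∀ x : X, c * ‖D x‖ ^ 2 ≤ 2 * (⟪D x, x⟫_ℂ).re := by
  have happ : ∀ x : X, ((c : ℂ) • D - 1) x = (c : ℂ) • D x - x := by
    intro x; simp
  have hsq : ∀ x : X, ‖(c : ℂ) • D x - x‖ ^ 2
      = c ^ 2 * ‖D x‖ ^ 2 - 2 * (c * (⟪D x, x⟫_ℂ).re) + ‖x‖ ^ 2 := by
    intro x
    rw [@norm_sub_sq ℂ, inner_smul_left]
    simp [Complex.conj_ofReal, norm_smul, Complex.mul_re, abs_of_pos hc]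
    ring
  constructor
  · intro h x
    have hx : ‖((c : ℂ) • D - 1) x‖ ≤ ‖x‖ := by
      calc ‖((c : ℂ) • D - 1) x‖ ≤ ‖(c : ℂ) • D - 1‖ * ‖x‖ := le_opNorm _ x
      _ ≤ 1 * ‖x‖ := mul_le_mul_of_nonneg_right h (norm_nonneg x)
      _ = ‖x‖ := one_mul _
    rw [happ] at hx
    have hx2 : ‖(c : ℂ) • D x - x‖ ^ 2 ≤ ‖x‖ ^ 2 :=
      pow_le_pow_left₀ (norm_nonneg _) hx 2
    rw [hsq] at hx2
    nlinarith [hx2, hc]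
  · intro h
    apply opNorm_le_bound _ zero_le_one
    intro x
    rw [one_mul, happ]
    have h2 : ‖(c : ℂ) • D x - x‖ ^ 2 ≤ ‖x‖ ^ 2 := by
      rw [hsq]
      nlinarith [h x, hc]
    exact (pow_le_pow_iff_left₀ (norm_nonneg _) (norm_nonneg _) two_ne_zero).mp h2

/-- There exists `c > 0` with `‖c•D − I‖ ≤ 1` iff there exists `c₁ > 0` with
`c₁ (Im D)² ≤ Re D`; in particular, any such `D` satisfies `Re D ≥ 0`. -/
theorem admissible_direction_from_neg_id_iff (D : X →L[ℂ] X) :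
    ((∃ c : ℝ, 0 < c ∧ ‖(c : ℂ) • D - 1‖ ≤ 1) ↔
      (∃ c₁ : ℝ, 0 < c₁ ∧ (reOp D - (c₁ : ℂ) • (imOp D * imOp D)).IsPositive)) ∧
    ((∃ c : ℝ, 0 < c ∧ ‖(c : ℂ) • D - 1‖ ≤ 1) → (reOp D).IsPositive) := by
  have hSsa : IsSelfAdjoint (imOp D * imOp D) := by
    have h := imOp_isSelfAdjoint D
    rw [IsSelfAdjoint, star_mul, h.star_eq]
  have hre_comb : ∀ (c₁ : ℝ) (x : X),
      (reOp D - (c₁ : ℂ) • (imOp D * imOp D)).reApplyInnerSelf x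
        = (⟪D x, x⟫_ℂ).re - c₁ * ‖imOp D x‖ ^ 2 := by
    intro c₁ x
    rw [reApplyInnerSelf_apply]
    rw [sub_apply, smul_apply, inner_sub_left, inner_smul_left]
    simp only [RCLike.re_to_complex, Complex.sub_re, Complex.mul_re, Complex.conj_ofReal,
      Complex.ofReal_re, Complex.ofReal_im, re_inner_reOp D x, re_inner_imOp_sq D x]
    ring
  have hre_reOp : ∀ x : X, (reOp D).reApplyInnerSelf x = (⟪D x, x⟫_ℂ).re := by
    intro x
    rw [reApplyInnerSelf_apply]
    simp only [RCLike.re_to_complex]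
    exact re_inner_reOp D x
  have fwd : ∀ c : ℝ, 0 < c → ‖(c : ℂ) • D - 1‖ ≤ 1 →
      (∀ x : X, c * ‖D x‖ ^ 2 ≤ 2 * (⟪D x, x⟫_ℂ).re) ∧
      (∀ x : X, c * ‖adjoint D x‖ ^ 2 ≤ 2 * (⟪D x, x⟫_ℂ).re) := by
    intro c hc hnorm
    refine ⟨(norm_smul_sub_one_le_iff D hc).mp hnorm, ?_⟩
    have hone : adjoint (1 : X →L[ℂ] X) = 1 := by
      rw [one_def]
      exact adjoint_id
    have hadj_eq : adjoint ((c : ℂ) • D - 1) = (c : ℂ) • adjoint D - 1 := by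
      rw [map_sub, map_smulₛₗ, hone]
      simp [Complex.conj_ofReal]
    have hnorm' : ‖(c : ℂ) • adjoint D - 1‖ ≤ 1 := by
      rw [← hadj_eq, adjoint.norm_map]
      exact hnorm
    intro x
    have h := (norm_smul_sub_one_le_iff (adjoint D) hc).mp hnorm' x
    have hswap : (⟪adjoint D x, x⟫_ℂ).re = (⟪D x, x⟫_ℂ).re := by
      rw [adjoint_inner_left]
      exact re_inner_comm' x (D x)
    rwa [hswap] at h
  constructor
  · constructor
    · rintro ⟨c, hc, hnorm⟩
      obtain ⟨h1, h2⟩ := fwd c hc hnorm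
      refine ⟨c / 2, by positivity, ?_⟩
      refine ⟨(reOp_isSelfAdjoint D).sub
        (IsSelfAdjoint.smul (by simp [IsSelfAdjoint, Complex.conj_ofReal]) hSsa) |>.isSymmetric, ?_⟩
      intro x
      rw [hre_comb]
      have hb := norm_imOp_apply_le D x
      have hbn : (0:ℝ) ≤ ‖imOp D x‖ := norm_nonneg _
      have hm2 : ‖imOp D x‖ ^ 2 ≤ ((‖D x‖ + ‖adjoint D x‖) / 2) ^ 2 :=
        pow_le_pow_left₀ hbn hb 2
      nlinarith [h1 x, h2 x, hm2, sq_nonneg (‖D x‖ - ‖adjoint D x‖)]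
    · rintro ⟨c₁, hc₁, hpos⟩
      have hineq : ∀ x : X, c₁ * ‖imOp D x‖ ^ 2 ≤ (⟪D x, x⟫_ℂ).re := by
        intro x
        have := hpos.2 x
        rw [hre_comb] at this
        linarith
      have hρnn : ∀ x : X, 0 ≤ (⟪D x, x⟫_ℂ).re := fun x =>
        le_trans (by positivity) (hineq x)
      have hreOp_pos : (reOp D).IsPositive := by
        refine ⟨(reOp_isSelfAdjoint D).isSymmetric, fun x => ?_⟩
        rw [hre_reOp]
        exact hρnn x
      have hMnn : (0:ℝ) ≤ ‖reOp D‖ := norm_nonneg _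
      have hKpos : (0:ℝ) < 2 * ‖reOp D‖ + 2 / c₁ + 1 := by positivity
      refine ⟨1 / (2 * ‖reOp D‖ + 2 / c₁ + 1), by positivity, ?_⟩
      rw [norm_smul_sub_one_le_iff D (by positivity)]
      intro x
      have hdecomp : D x = reOp D x + Complex.I • imOp D x := by
        have hop : reOp D + Complex.I • imOp D = D := by
          rw [reOp, imOp]
          have hI : Complex.I • ((1 / (2 * Complex.I) : ℂ) • (D - adjoint D))
              = (1 / 2 : ℂ) • (D - adjoint D) := by
            rw [smul_smul]
            congr 1
            rw [mul_one_div, div_eq_div_iff (by simp [Complex.I_ne_zero]) two_ne_zero]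
            ring
          rw [hI]
          module
        conv_lhs => rw [← hop]
        simp
      have hrsq : ‖reOp D x‖ ^ 2 ≤ ‖reOp D‖ * (⟪D x, x⟫_ℂ).re := by
        have := isPositive_norm_apply_sq_le hreOp_pos x
        rwa [re_inner_reOp] at this
      have hisq : c₁ * ‖imOp D x‖ ^ 2 ≤ (⟪D x, x⟫_ℂ).re := hineq x
      have hDle : ‖D x‖ ≤ ‖reOp D x‖ + ‖imOp D x‖ := by
        rw [hdecomp]
        refine (norm_add_le _ _).trans ?_
        rw [norm_smul, Complex.norm_I, one_mul]
      have hb2 : 2 * ‖imOp D x‖ ^ 2 ≤ 2 / c₁ * (⟪D x, x⟫_ℂ).re := by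
        rw [div_mul_eq_mul_div, le_div_iff₀ hc₁]
        nlinarith [hisq]
      have hDsq : ‖D x‖ ^ 2 ≤ (2 * ‖reOp D‖ + 2 / c₁ + 1) * (⟪D x, x⟫_ℂ).re := by
        have h2ab : ‖D x‖ ^ 2 ≤ 2 * ‖reOp D x‖ ^ 2 + 2 * ‖imOp D x‖ ^ 2 := by
          nlinarith [hDle, norm_nonneg (D x), norm_nonneg (reOp D x), norm_nonneg (imOp D x),
            sq_nonneg (‖reOp D x‖ - ‖imOp D x‖)]
        nlinarith [hrsq, hρnn x]
      rw [div_mul_eq_mul_div, one_mul, div_le_iff₀ hKpos]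
      nlinarith [hDsq, mul_nonneg (le_of_lt hKpos) (hρnn x)]
  · rintro ⟨c, hc, hnorm⟩
    obtain ⟨h1, _⟩ := fwd c hc hnorm
    refine ⟨(reOp_isSelfAdjoint D).isSymmetric, fun x => ?_⟩
    rw [hre_reOp]
    nlinarith [h1 x, sq_nonneg (‖D x‖)]
end

section
/- Let (ξⱼ)ⱼ∈ℕ be independent complex-valued random variables. Then P{limⱼ→∞ ξⱼ = −1} = 1 if and only if for every δ > 0 there exists N ∈ ℕ such that the infinite product ∏_{j=N}^∞ P{|ξⱼ + 1| < δ} is strictly positive. Moreover P{limⱼ→∞ ξⱼ = −1} is either 0 or 1. -/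
open MeasureTheory ProbabilityTheory Filter

section Aux

-- Analytic lemma 2: summable implies positive product
lemma aux_prod_pos_of_summable {a : ℕ → ℝ} (h0 : ∀ j, 0 ≤ a j) (ha : Summable a) :
    ∃ N : ℕ, ∃ L : ℝ, 0 < L ∧
      Tendsto (fun n => ∏ j ∈ Finset.Ico N n, (1 - a j)) atTop (nhds L) := by
  obtain ⟨N, hN⟩ := (Metric.tendsto_atTop.1 ha.tendsto_atTop_zero) (1/2) (by norm_num)
  have hN' : ∀ j, N ≤ j → a j ≤ 1/2 := by
    intro j hj
    have := hN j hj
    rw [Real.dist_eq, sub_zero, abs_of_nonneg (h0 j)] at this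
    linarith
  set g : ℕ → ℝ := fun j => Real.log (1 - a j) with hg
  have hpos : ∀ j, N ≤ j → 0 < 1 - a j := fun j hj => by
    have := hN' j hj; linarith
  have hgb : ∀ i : ℕ, |g (i + N)| ≤ 2 * a (i + N) := by
    intro i
    have h1 : a (i + N) ≤ 1/2 := hN' _ (Nat.le_add_left _ _)
    have h2 : 0 < 1 - a (i + N) := by linarith
    have hle : g (i + N) ≤ 0 :=
      Real.log_nonpos (by linarith [h0 (i + N)]) (by linarith [h0 (i + N)])
    rw [abs_of_nonpos hle]
    have hlog : Real.log (1 - a (i + N))⁻¹ ≤ (1 - a (i + N))⁻¹ - 1 :=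
      Real.log_le_sub_one_of_pos (by positivity)
    rw [Real.log_inv] at hlog
    have hinv : (1 - a (i + N))⁻¹ - 1 = a (i + N) / (1 - a (i + N)) := by
      field_simp
      ring
    have hdiv : a (i + N) / (1 - a (i + N)) ≤ 2 * a (i + N) := by
      rw [div_le_iff₀ h2]
      nlinarith [h0 (i + N)]
    simp only [hg]
    rw [hinv] at hlog
    linarith
  have hsg : Summable (fun i => g (i + N)) := by
    apply Summable.of_abs
    apply Summable.of_nonneg_of_le (fun i => abs_nonneg _) hgb
    exact ((summable_nat_add_iff N).2 ha).mul_left 2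
  obtain ⟨S, hS⟩ := hsg
  refine ⟨N, Real.exp S, Real.exp_pos S, ?_⟩
  have hsum : Tendsto (fun n => ∑ i ∈ Finset.range n, g (i + N)) atTop (nhds S) :=
    hS.tendsto_sum_nat
  have hsum2 : Tendsto (fun n => ∑ j ∈ Finset.Ico N n, g j) atTop (nhds S) := by
    have h1 : Tendsto (fun n : ℕ => n - N) atTop atTop :=
      tendsto_sub_atTop_nat N
    have := hsum.comp h1
    apply this.congr'
    filter_upwards [eventually_ge_atTop N] with n hn
    simp only [Function.comp_apply]
    rw [Finset.sum_Ico_eq_sum_range]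
    refine Finset.sum_congr rfl fun i _ => by ring_nf
  have heq : ∀ᶠ n in atTop, ∏ j ∈ Finset.Ico N n, (1 - a j)
      = Real.exp (∑ j ∈ Finset.Ico N n, g j) := by
    filter_upwards [eventually_ge_atTop N] with n hn
    rw [Real.exp_sum]
    refine Finset.prod_congr rfl fun j hj => ?_
    rw [Real.exp_log (hpos j (Finset.mem_Ico.1 hj).1)]
  exact ((Real.continuous_exp.tendsto S).comp hsum2).congr'
    (by filter_upwards [heq] with n hn using hn.symm)

lemma aux_summable_of_prod_pos {a : ℕ → ℝ} (h0 : ∀ j, 0 ≤ a j) (h1 : ∀ j, a j ≤ 1)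
    {N : ℕ} {L : ℝ} (hL : 0 < L)
    (hT : Tendsto (fun n => ∏ j ∈ Finset.Ico N n, (1 - a j)) atTop (nhds L)) :
    Summable a := by
  have hf0 : ∀ j, 0 ≤ 1 - a j := fun j => by linarith [h1 j]
  have hf1 : ∀ j, 1 - a j ≤ 1 := fun j => by linarith [h0 j]
  have hanti : Antitone (fun n => ∏ j ∈ Finset.Ico N n, (1 - a j)) := by
    intro m n hmn
    dsimp only
    rcases le_or_gt N m with hNm | hmN
    · rw [← Finset.prod_Ico_consecutive _ hNm hmn]
      have hle1 : ∏ j ∈ Finset.Ico m n, (1 - a j) ≤ 1 :=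
        Finset.prod_le_one (fun j _ => hf0 j) (fun j _ => hf1 j)
      have hnn : 0 ≤ ∏ j ∈ Finset.Ico N m, (1 - a j) :=
        Finset.prod_nonneg fun j _ => hf0 j
      calc (∏ j ∈ Finset.Ico N m, (1 - a j)) * ∏ j ∈ Finset.Ico m n, (1 - a j)
          ≤ (∏ j ∈ Finset.Ico N m, (1 - a j)) * 1 :=
            mul_le_mul_of_nonneg_left hle1 hnn
        _ = ∏ j ∈ Finset.Ico N m, (1 - a j) := by ring
    · rw [show Finset.Ico N m = ∅ from Finset.Ico_eq_empty (by omega), Finset.prod_empty]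
      exact Finset.prod_le_one (fun j _ => hf0 j) (fun j _ => hf1 j)
  have hge : ∀ n, L ≤ ∏ j ∈ Finset.Ico N n, (1 - a j) := fun n =>
    hanti.le_of_tendsto hT n
  -- partial sums bounded by -log L
  have hbound : ∀ n, ∑ j ∈ Finset.Ico N n, a j ≤ -Real.log L := by
    intro n
    have hexp : ∏ j ∈ Finset.Ico N n, (1 - a j)
        ≤ Real.exp (-∑ j ∈ Finset.Ico N n, a j) := by
      rw [← Finset.sum_neg_distrib, Real.exp_sum]
      exact Finset.prod_le_prod (fun j _ => hf0 j)
        (fun j _ => by linarith [Real.add_one_le_exp (-a j)])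
    have hLe : L ≤ Real.exp (-∑ j ∈ Finset.Ico N n, a j) := le_trans (hge n) hexp
    have := Real.log_le_log hL hLe
    rw [Real.log_exp] at this
    linarith
  have hs : Summable (fun i => a (i + N)) := by
    apply summable_of_sum_range_le (fun i => h0 _)
    intro n
    calc ∑ i ∈ Finset.range n, a (i + N)
        = ∑ j ∈ Finset.Ico N (N + n), a j := by
          rw [Finset.sum_Ico_eq_sum_range]
          simp only [Nat.add_sub_cancel_left]
          exact Finset.sum_congr rfl fun i _ => by ring_nf
      _ ≤ -Real.log L := hbound _
  exact (summable_nat_add_iff N).1 hs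

lemma aux_iIndepSet_preimage {Ω : Type*} [MeasurableSpace Ω]
    (P : Measure Ω) [IsProbabilityMeasure P] (ξ : ℕ → Ω → ℂ)
    (hindep : iIndepFun ξ P)
    (S : ℕ → Set ℂ) (hS : ∀ j, MeasurableSet (S j)) :
    iIndepSet (fun j => ξ j ⁻¹' S j) P := by
  rw [← ProbabilityTheory.iIndep_comap_mem_iff]
  have h := hindep.comp (fun j (z : ℂ) => z ∈ S j) (fun j => (hS j).mem)
  have h2 := (ProbabilityTheory.iIndepFun_iff_iIndep _ _ _).1 h
  convert h2 using 2
  rfl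

end Aux

/-- For independent complex random variables `(ξ j)`, the event
`{lim ξ j = −1}` has probability 1 iff for every `δ > 0` the tail infinite product
`∏_{j=N}^∞ P{|ξ j + 1| < δ}` is strictly positive for some `N`; moreover this
probability is either 0 or 1. -/
theorem prob_tendsto_neg_one_zero_one_law {Ω : Type*} [MeasurableSpace Ω]
    (P : Measure Ω) [IsProbabilityMeasure P] (ξ : ℕ → Ω → ℂ)
    (hmeas : ∀ j, Measurable (ξ j))
    (hindep : iIndepFun ξ P) :
    ((P {ω | Tendsto (fun j => ξ j ω) atTop (nhds (-1))} = 1) ↔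
      ∀ δ : ℝ, 0 < δ → ∃ N : ℕ, ∃ L : ℝ, 0 < L ∧
        Tendsto (fun n => ∏ j ∈ Finset.Ico N n,
            (P {ω | ‖ξ j ω + 1‖ < δ}).toReal) atTop (nhds L)) ∧
    (P {ω | Tendsto (fun j => ξ j ω) atTop (nhds (-1))} = 0 ∨
      P {ω | Tendsto (fun j => ξ j ω) atTop (nhds (-1))} = 1) := by
  set T : Set Ω := {ω | Tendsto (fun j => ξ j ω) atTop (nhds (-1))} with hTdef
  set A : ℝ → ℕ → Set Ω := fun δ j => ξ j ⁻¹' {z : ℂ | δ ≤ ‖z + 1‖} with hAdef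
  have habs : ∀ ω j, dist (ξ j ω) (-1) = ‖ξ j ω + 1‖ := by
    intro ω j
    rw [Complex.dist_eq, sub_neg_eq_add]
  have hSm : ∀ δ : ℝ, MeasurableSet {z : ℂ | δ ≤ ‖z + 1‖} := by
    intro δ
    exact measurableSet_le measurable_const
      (continuous_norm.measurable.comp (measurable_id.add_const 1))
  have hAm : ∀ δ j, MeasurableSet (A δ j) := fun δ j => (hmeas j) (hSm δ)
  have hAindep : ∀ δ : ℝ, iIndepSet (A δ) P := fun δ =>
    aux_iIndepSet_preimage P ξ hindep _ (fun _ => hSm δ)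
  -- the complement identity
  have hAc : ∀ δ j, (A δ j)ᶜ = {ω | ‖ξ j ω + 1‖ < δ} := by
    intro δ j
    ext ω
    simp [hAdef, not_le]
  set a : ℝ → ℕ → ℝ := fun δ j => (P (A δ j)).toReal with hadef
  have ha0 : ∀ δ j, 0 ≤ a δ j := fun δ j => ENNReal.toReal_nonneg
  have ha1 : ∀ δ j, a δ j ≤ 1 := fun δ j => by
    simpa using ENNReal.toReal_mono ENNReal.one_ne_top (prob_le_one (μ := P) (s := A δ j))
  have hp : ∀ δ j, (P {ω | ‖ξ j ω + 1‖ < δ}).toReal = 1 - a δ j := by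
    intro δ j
    rw [← hAc δ j, measure_compl (hAm δ j) (measure_ne_top _ _), measure_univ,
      ENNReal.toReal_sub_of_le (prob_le_one) ENNReal.one_ne_top, ENNReal.toReal_one]
  -- Borel-Cantelli 1
  have hBC1 : ∀ δ : ℝ, Summable (a δ) → P (limsup (A δ) atTop) = 0 := by
    intro δ hsum
    apply measure_limsup_atTop_eq_zero
    have : ∑' j, P (A δ j) = ENNReal.ofReal (∑' j, a δ j) := by
      rw [ENNReal.ofReal_tsum_of_nonneg (ha0 δ) hsum]
      exact tsum_congr fun j => (ENNReal.ofReal_toReal (measure_ne_top _ _)).symm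
    rw [this]
    exact ENNReal.ofReal_ne_top
  -- Borel-Cantelli 2
  have hBC2 : ∀ δ : ℝ, ¬ Summable (a δ) → P (limsup (A δ) atTop) = 1 := by
    intro δ hns
    apply ProbabilityTheory.measure_limsup_eq_one (hAm δ) (hAindep δ)
    by_contra h
    exact hns (ENNReal.summable_toReal h)
  -- combined key equivalence
  have key : ∀ δ : ℝ, 0 < δ → (P (limsup (A δ) atTop) = 0 ↔
      ∃ N : ℕ, ∃ L : ℝ, 0 < L ∧
        Tendsto (fun n => ∏ j ∈ Finset.Ico N n,
          (P {ω | ‖ξ j ω + 1‖ < δ}).toReal) atTop (nhds L)) := by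
    intro δ hδ
    have hprodeq : ∀ N : ℕ, (fun n => ∏ j ∈ Finset.Ico N n,
        (P {ω | ‖ξ j ω + 1‖ < δ}).toReal)
        = fun n => ∏ j ∈ Finset.Ico N n, (1 - a δ j) := by
      intro N; funext n; exact Finset.prod_congr rfl fun j _ => hp δ j
    constructor
    · intro h0
      have hsum : Summable (a δ) := by
        by_contra hns
        rw [hBC2 δ hns] at h0
        exact one_ne_zero h0
      obtain ⟨N, L, hL, hT⟩ := aux_prod_pos_of_summable (ha0 δ) hsum
      exact ⟨N, L, hL, by rw [hprodeq N]; exact hT⟩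
    · rintro ⟨N, L, hL, hT⟩
      rw [hprodeq N] at hT
      exact hBC1 δ (aux_summable_of_prod_pos (ha0 δ) (ha1 δ) hL hT)
  -- tendsto characterization
  have hTeq : T = ⋂ k : ℕ, (limsup (A (1 / (k + 1 : ℝ))) atTop)ᶜ := by
    ext ω
    simp only [Set.mem_iInter, Set.mem_compl_iff, mem_limsup_iff_frequently_mem,
      not_frequently, hTdef, Set.mem_setOf_eq, hAdef, Set.mem_preimage, not_le]
    constructor
    · intro h k
      have hε : (0:ℝ) < 1 / (k + 1 : ℝ) := by positivity
      obtain ⟨N, hN⟩ := Metric.tendsto_atTop.1 h _ hε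
      filter_upwards [eventually_ge_atTop N] with j hj
      have := hN j hj
      rwa [habs ω j] at this
    · intro h
      rw [Metric.tendsto_atTop]
      intro ε hε
      obtain ⟨k, hk⟩ := exists_nat_one_div_lt hε
      obtain ⟨N, hN⟩ := (h k).exists_forall_of_atTop
      exact ⟨N, fun j hj => by rw [habs ω j]; exact lt_trans (hN j hj) hk⟩
  have hTm : MeasurableSet T := by
    rw [hTeq]
    exact MeasurableSet.iInter fun k => (MeasurableSet.measurableSet_limsup (hAm _)).compl
  have hsub : ∀ δ : ℝ, 0 < δ → limsup (A δ) atTop ⊆ Tᶜ := by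
    intro δ hδ ω hω
    rw [mem_limsup_iff_frequently_mem] at hω
    intro hT
    obtain ⟨N, hN⟩ := Metric.tendsto_atTop.1 hT δ hδ
    obtain ⟨j, hjN, hj⟩ := (hω.and_eventually (eventually_ge_atTop N)).exists
    have := hN j hj
    rw [habs ω j] at this
    exact absurd hjN (by simp only [hAdef, Set.mem_preimage, Set.mem_setOf_eq, not_le]; exact this)
  have hiff : (P T = 1 ↔ ∀ δ : ℝ, 0 < δ → ∃ N : ℕ, ∃ L : ℝ, 0 < L ∧
      Tendsto (fun n => ∏ j ∈ Finset.Ico N n,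
        (P {ω | ‖ξ j ω + 1‖ < δ}).toReal) atTop (nhds L)) := by
    constructor
    · intro h1 δ hδ
      have hc : P Tᶜ = 0 := (prob_compl_eq_zero_iff hTm).2 h1
      exact (key δ hδ).1 (measure_mono_null (hsub δ hδ) hc)
    · intro h
      have h0 : ∀ k : ℕ, P (limsup (A (1 / (k + 1 : ℝ))) atTop) = 0 := fun k =>
        (key _ (by positivity)).2 (h _ (by positivity))
      have hc : P Tᶜ = 0 := by
        have : Tᶜ = ⋃ k : ℕ, limsup (A (1 / (k + 1 : ℝ))) atTop := by
          rw [hTeq, Set.compl_iInter]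
          simp
        rw [this]
        exact measure_iUnion_null h0
      exact (prob_compl_eq_zero_iff hTm).1 hc
  refine ⟨hiff, ?_⟩
  by_cases hcond : ∀ δ : ℝ, 0 < δ → ∃ N : ℕ, ∃ L : ℝ, 0 < L ∧
      Tendsto (fun n => ∏ j ∈ Finset.Ico N n,
        (P {ω | ‖ξ j ω + 1‖ < δ}).toReal) atTop (nhds L)
  · exact Or.inr (hiff.2 hcond)
  · left
    push_neg at hcond
    obtain ⟨δ, hδ, hnot⟩ := hcond
    have hns : ¬ Summable (a δ) := by
      intro hsum
      have := (key δ hδ).1 (hBC1 δ hsum)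
      obtain ⟨N, L, hL, hT⟩ := this
      exact absurd hT (hnot N L hL)
    have h1 : P (limsup (A δ) atTop) = 1 := hBC2 δ hns
    have hc1 : P Tᶜ = 1 := le_antisymm prob_le_one (h1 ▸ measure_mono (hsub δ hδ))
    exact (prob_compl_eq_one_iff hTm).1 hc1
end
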